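/- Let 0 < a < b, α ≥ 2 and p > 0. The function f(x) = (x^p - a^p)^(α-1) + (b^p - x^p)^(α-1) is symmetrized p-convex on [a,b]. -/

import Mathlib

noncomputable section
open Real Set MeasureTheory intervalIntegral

/-- `f` is p-convex on `[a,b]`. -/
def PConvexOn (p a b : ℝ) (f : ℝ → ℝ) : Prop :=
  ∀ x ∈ Set.Icc a b, ∀ y ∈ Set.Icc a b, ∀ t ∈ Set.Icc (0:ℝ) 1,
    f ((t * x ^ p + (1 - t) * y ^ p) ^ (1/p)) ≤ t * f x + (1 - t) * f y

/-- The p-symmetrical transform of `f` on `[a,b]`. -/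
def PSym (p a b : ℝ) (f : ℝ → ℝ) : ℝ → ℝ :=
  fun x => (f x + f ((a ^ p + b ^ p - x ^ p) ^ (1/p))) / 2

lemma aux_convex {A B α : ℝ} (hα : 1 ≤ α) :
    ConvexOn ℝ (Set.Icc A B) (fun u => (u - A) ^ α + (B - u) ^ α) := by
  have h1 : ConvexOn ℝ (Set.Icc A B) (fun u => (u - A) ^ α) := by
    refine ⟨convex_Icc A B, fun u hu v hv s t hs ht hst => ?_⟩
    have h := (convexOn_rpow hα).2 (x := u - A) (by simp [sub_nonneg.2 hu.1])
      (y := v - A) (by simp [sub_nonneg.2 hv.1]) hs ht hst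
    simp only [smul_eq_mul] at h ⊢
    have e : s * u + t * v - A = s * (u - A) + t * (v - A) := by linear_combination A * hst
    rw [e]; exact h
  have h2 : ConvexOn ℝ (Set.Icc A B) (fun u => (B - u) ^ α) := by
    refine ⟨convex_Icc A B, fun u hu v hv s t hs ht hst => ?_⟩
    have h := (convexOn_rpow hα).2 (x := B - u) (by simp [sub_nonneg.2 hu.2])
      (y := B - v) (by simp [sub_nonneg.2 hv.2]) hs ht hst
    simp only [smul_eq_mul] at h ⊢
    have e : B - (s * u + t * v) = s * (B - u) + t * (B - v) := by linear_combination (-B) * hst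
    rw [e]; exact h
  exact h1.add h2

theorem symmetrized_pconvex_example (p a b α : ℝ) (hp : 0 < p) (ha : 0 < a)
    (hab : a < b) (hα : 2 ≤ α) :
    PConvexOn p a b
      (PSym p a b (fun x => (x ^ p - a ^ p) ^ (α - 1) + (b ^ p - x ^ p) ^ (α - 1))) := by
  set A := a ^ p with hA
  set B := b ^ p with hB
  have hA0 : 0 ≤ A := rpow_nonneg ha.le p
  have hAB : A ≤ B := rpow_le_rpow ha.le hab.le hp.le
  set g : ℝ → ℝ := fun u => (u - A) ^ (α - 1) + (B - u) ^ (α - 1) with hg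
  have hgconv := aux_convex (A := A) (B := B) (α := α - 1) (by linarith)
  -- membership of x^p
  have hmem : ∀ x ∈ Set.Icc a b, x ^ p ∈ Set.Icc A B := fun x hx =>
    ⟨rpow_le_rpow ha.le hx.1 hp.le, rpow_le_rpow (ha.le.trans hx.1) hx.2 hp.le⟩
  -- PSym computes to g on arguments whose p-power is in [A,B]
  have key : ∀ u ∈ Set.Icc A B,
      PSym p a b (fun x => (x ^ p - A) ^ (α - 1) + (B - x ^ p) ^ (α - 1))
        (u ^ (1/p)) = g u := by
    intro u hu
    have hu0 : 0 ≤ u := hA0.trans hu.1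
    have h1 : (u ^ (1/p)) ^ p = u := by
      rw [one_div]; exact rpow_inv_rpow hu0 hp.ne'
    have h2 : 0 ≤ A + B - u := by linarith [hu.2]
    have h3 : ((A + B - u) ^ (1/p)) ^ p = A + B - u := by
      rw [one_div]; exact rpow_inv_rpow h2 hp.ne'
    simp only [PSym, ← hA, ← hB, h1, h3, hg]
    have e1 : A + B - u - A = B - u := by ring
    have e2 : B - (A + B - u) = u - A := by ring
    rw [e1, e2]; ring
  intro x hx y hy t ht
  have hxA := hmem x hx
  have hyA := hmem y hy
  have hcomb : t * x ^ p + (1 - t) * y ^ p ∈ Set.Icc A B := by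
    have h1t : (0:ℝ) ≤ 1 - t := by linarith [ht.2]
    constructor
    · have c1 := mul_le_mul_of_nonneg_left hxA.1 ht.1
      have c2 := mul_le_mul_of_nonneg_left hyA.1 h1t
      nlinarith
    · have c1 := mul_le_mul_of_nonneg_left hxA.2 ht.1
      have c2 := mul_le_mul_of_nonneg_left hyA.2 h1t
      nlinarith
  have hxeq : x = (x ^ p) ^ (1/p) := by
    rw [one_div, rpow_rpow_inv (ha.le.trans hx.1) hp.ne']
  have hyeq : y = (y ^ p) ^ (1/p) := by
    rw [one_div, rpow_rpow_inv (ha.le.trans hy.1) hp.ne']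
  calc PSym p a b (fun x => (x ^ p - A) ^ (α - 1) + (B - x ^ p) ^ (α - 1))
        ((t * x ^ p + (1 - t) * y ^ p) ^ (1/p))
      = g (t * x ^ p + (1 - t) * y ^ p) := key _ hcomb
    _ ≤ t * g (x ^ p) + (1 - t) * g (y ^ p) := by
        have h := hgconv.2 hxA hyA ht.1 (by linarith [ht.2] : (0:ℝ) ≤ 1 - t)
          (by ring)
        simp only [smul_eq_mul] at h
        exact h
    _ = _ := by
        rw [← key _ hxA, ← key _ hyA, ← hxeq, ← hyeq]
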